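/- Let S be a finite set with |S| = M, let k be a positive integer with k < M, let K ≥ 1 be a real number, and let T be a positive integer with T ≥ K · k / (1 − k/M). If Z_1, …, Z_T are i.i.d. uniformly distributed random elements of S, then the probability that the number of distinct values among Z_1, …, Z_T is at least k is at least 1 − 1/K. -/

import Mathlib

set_option linter.unusedSectionVars false

namespace Stmt3Aux

variable {S : Type*} [Fintype S] [DecidableEq S] {T : ℕ}

/-- The image of the first `t` coordinates. -/
def pim (z : Fin T → S) (t : ℕ) : Finset S :=
  (Finset.univ.filter (fun i : Fin T => (i : ℕ) < t)).image z

/-- The number of distinct values among the first `t` coordinates. -/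
def nct (z : Fin T → S) (t : ℕ) : ℕ := (pim z t).card

lemma nct_mono (z : Fin T → S) {t t' : ℕ} (h : t ≤ t') : nct z t ≤ nct z t' := by
  apply Finset.card_le_card
  apply Finset.image_subset_image
  intro i hi
  simp only [Finset.mem_filter, Finset.mem_univ, true_and] at hi ⊢
  omega

lemma nct_top (z : Fin T → S) : nct z T = (Finset.image z Finset.univ).card := by
  unfold nct pim
  congr 2
  apply Finset.filter_true_of_mem
  intro i _
  exact i.isLt

lemma nct_zero (z : Fin T → S) : nct z 0 = 0 := by
  simp [nct, pim]

lemma nct_succ_pos (hT : 0 < T) (z : Fin T → S) (t : ℕ) : 1 ≤ nct z (t + 1) := by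
  rw [Nat.succ_le_iff]
  unfold nct
  rw [Finset.card_pos]
  exact ⟨z ⟨0, hT⟩, Finset.mem_image.2 ⟨⟨0, hT⟩, by simp, rfl⟩⟩

lemma pim_succ {t : ℕ} (ht : t < T) (z : Fin T → S) :
    pim z (t + 1) = insert (z ⟨t, ht⟩) (pim z t) := by
  unfold pim
  rw [← Finset.image_insert]
  congr 1
  ext i
  simp only [Finset.mem_insert, Finset.mem_filter, Finset.mem_univ, true_and]
  constructor
  · intro h
    rcases Nat.lt_succ_iff_lt_or_eq.1 h with h | h
    · exact Or.inr h
    · exact Or.inl (Fin.ext h)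
  · rintro (h | h)
    · subst h; simp
    · omega

lemma nct_succ {t : ℕ} (ht : t < T) (z : Fin T → S) :
    nct z (t + 1) = if z ⟨t, ht⟩ ∈ pim z t then nct z t else nct z t + 1 := by
  unfold nct
  rw [pim_succ ht]
  by_cases h : z ⟨t, ht⟩ ∈ pim z t
  · rw [if_pos h, Finset.card_insert_of_mem h]
  · rw [if_neg h, Finset.card_insert_of_notMem h]

lemma pim_update {t : ℕ} (ht : t < T) (z : Fin T → S) (s : S) :
    pim (Function.update z ⟨t, ht⟩ s) t = pim z t := by
  unfold pim
  apply Finset.image_congr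
  intro i hi
  simp only [Finset.coe_filter, Finset.mem_univ, true_and, Set.mem_setOf_eq] at hi
  apply Function.update_of_ne
  intro h
  rw [h] at hi
  simp at hi

lemma nct_update {t : ℕ} (ht : t < T) (z : Fin T → S) (s : S) :
    nct (Function.update z ⟨t, ht⟩ s) t = nct z t := by
  unfold nct; rw [pim_update ht]

/-- Key counting identity: conditionally on the first `t` values having `j` distinct
elements, the probability that the `(t+1)`-st value is a repeat is `j / M`. -/
lemma key_count {t : ℕ} (ht : t < T) (j : ℕ) :
    Fintype.card S *
      (Finset.univ.filter (fun z : Fin T → S =>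
        nct z t = j ∧ z ⟨t, ht⟩ ∈ pim z t)).card
    = j * (Finset.univ.filter (fun z : Fin T → S => nct z t = j)).card := by
  set a : Fin T := ⟨t, ht⟩ with ha
  set C := Finset.univ.filter (fun z : Fin T → S => nct z t = j) with hC
  set R := Finset.univ.filter
      (fun z : Fin T → S => nct z t = j ∧ z a ∈ pim z t) with hR
  have h1 : (R ×ˢ (Finset.univ : Finset S)).card = Fintype.card S * R.card := by
    rw [Finset.card_product, Finset.card_univ]; ring
  have h2 : (C.sigma (fun z => pim z t)).card = j * C.card := by
    rw [Finset.card_sigma]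
    have hval : ∀ z ∈ C, (pim z t).card = j := by
      intro z hz
      simp only [hC, Finset.mem_filter] at hz
      exact hz.2
    rw [Finset.sum_congr rfl hval, Finset.sum_const, smul_eq_mul, mul_comm]
  have h3 : (R ×ˢ (Finset.univ : Finset S)).card
      = (C.sigma (fun z => pim z t)).card := by
    apply Finset.card_nbij'
      (i := fun p => ⟨Function.update p.1 a p.2, p.1 a⟩)
      (j := fun q => (Function.update q.1 a q.2, q.1 a))
    · rintro ⟨z, s⟩ hp
      simp only [Finset.mem_coe, hR, Finset.mem_product, Finset.mem_filter, Finset.mem_univ, true_and,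
        and_true] at hp
      simp only [Finset.mem_coe, hC, Finset.mem_sigma, Finset.mem_filter, Finset.mem_univ, true_and]
      rw [ha] at *
      constructor
      · rw [nct_update ht]; exact hp.1
      · rw [pim_update ht]; exact hp.2
    · rintro ⟨z, b⟩ hq
      simp only [Finset.mem_coe, hC, Finset.mem_sigma, Finset.mem_filter, Finset.mem_univ, true_and] at hq
      simp only [Finset.mem_coe, hR, Finset.mem_product, Finset.mem_filter, Finset.mem_univ, true_and,
        and_true]
      rw [ha] at *
      refine ⟨by rw [nct_update ht]; exact hq.1, ?_⟩
      rw [Function.update_self, pim_update ht]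
      exact hq.2
    · rintro ⟨z, s⟩ hp
      simp [Function.update_self, Function.update_idem, Function.update_eq_self]
    · rintro ⟨z, b⟩ hq
      simp [Function.update_self, Function.update_idem, Function.update_eq_self]
  rw [← h1, h3, h2]

/-- Recursion: to be at level `j+1` at time `t+1`, either be at `j+1` and repeat,
or be at `j` and draw a fresh value. -/
lemma c_succ {t : ℕ} (ht : t < T) (j : ℕ) :
    (Finset.univ.filter (fun z : Fin T → S => nct z (t + 1) = j + 1)).card
    = (Finset.univ.filter (fun z : Fin T → S =>
        nct z t = j + 1 ∧ z ⟨t, ht⟩ ∈ pim z t)).card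
    + (Finset.univ.filter (fun z : Fin T → S =>
        nct z t = j ∧ nct z (t + 1) = j + 1)).card := by
  rw [← Finset.card_union_of_disjoint]
  · congr 1
    ext z
    simp only [Finset.mem_union, Finset.mem_filter, Finset.mem_univ, true_and]
    by_cases h : z ⟨t, ht⟩ ∈ pim z t <;> simp [nct_succ ht, h] <;> try omega
  · rw [Finset.disjoint_left]
    intro z hz hz'
    simp only [Finset.mem_filter, Finset.mem_univ, true_and] at hz hz'
    omega

/-- The "fresh arrival at level j+1" events at different times are disjoint. -/
lemma inflow_sum_le (j : ℕ) :
    ∑ t ∈ Finset.range T, (Finset.univ.filter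
      (fun z : Fin T → S => nct z t = j ∧ nct z (t + 1) = j + 1)).card
    ≤ Fintype.card S ^ T := by
  classical
  have hdis : ∀ t ∈ Finset.range T, ∀ t' ∈ Finset.range T, t ≠ t' →
      Disjoint (Finset.univ.filter
        (fun z : Fin T → S => nct z t = j ∧ nct z (t + 1) = j + 1))
        (Finset.univ.filter
        (fun z : Fin T → S => nct z t' = j ∧ nct z (t' + 1) = j + 1)) := by
    intro t _ t' _ hne
    rw [Finset.disjoint_left]
    intro z hz hz'
    simp only [Finset.mem_filter, Finset.mem_univ, true_and] at hz hz'
    rcases Nat.lt_or_ge t t' with h | h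
    · have := nct_mono z (show t + 1 ≤ t' by omega)
      omega
    · have := nct_mono z (show t' + 1 ≤ t by omega)
      omega
  calc ∑ t ∈ Finset.range T, (Finset.univ.filter
        (fun z : Fin T → S => nct z t = j ∧ nct z (t + 1) = j + 1)).card
      = ((Finset.range T).biUnion (fun t => Finset.univ.filter
        (fun z : Fin T → S => nct z t = j ∧ nct z (t + 1) = j + 1))).card :=
        (Finset.card_biUnion hdis).symm
    _ ≤ (Finset.univ : Finset (Fin T → S)).card := Finset.card_le_univ _
    _ = Fintype.card S ^ T := by
        rw [Finset.card_univ, Fintype.card_fun, Fintype.card_fin]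

/-- Expected total time at level `j+1` is at most `M/(M-j-1)` (counting form). -/
lemma level_sum (j : ℕ) :
    (Fintype.card S - (j + 1)) * ∑ t ∈ Finset.range (T + 1),
        (Finset.univ.filter (fun z : Fin T → S => nct z t = j + 1)).card
      ≤ Fintype.card S ^ (T + 1) := by
  set M := Fintype.card S with hM
  set f : ℕ → ℕ := fun t =>
    (Finset.univ.filter (fun z : Fin T → S => nct z t = j + 1)).card with hf
  set g : ℕ → ℕ := fun t =>
    (Finset.univ.filter (fun z : Fin T → S =>
      nct z t = j ∧ nct z (t + 1) = j + 1)).card with hg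
  have hf0 : f 0 = 0 := by
    simp [hf, nct_zero]
  have hstep : ∀ t ∈ Finset.range T, M * f (t + 1) = (j + 1) * f t + M * g t := by
    intro t ht
    rw [Finset.mem_range] at ht
    rw [hf]
    simp only
    rw [c_succ ht j, Nat.mul_add, key_count ht (j + 1)]
  have hsum : M * ∑ t ∈ Finset.range (T + 1), f t
      ≤ (j + 1) * ∑ t ∈ Finset.range (T + 1), f t + M ^ (T + 1) := by
    have e1 : ∑ t ∈ Finset.range (T + 1), f t
        = ∑ t ∈ Finset.range T, f (t + 1) := by
      rw [Finset.sum_range_succ', hf0, add_zero]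
    calc M * ∑ t ∈ Finset.range (T + 1), f t
        = ∑ t ∈ Finset.range T, M * f (t + 1) := by
          rw [e1, Finset.mul_sum]
      _ = ∑ t ∈ Finset.range T, ((j + 1) * f t + M * g t) :=
          Finset.sum_congr rfl hstep
      _ = (j + 1) * ∑ t ∈ Finset.range T, f t
          + M * ∑ t ∈ Finset.range T, g t := by
          rw [Finset.sum_add_distrib, Finset.mul_sum, Finset.mul_sum]
      _ ≤ (j + 1) * ∑ t ∈ Finset.range (T + 1), f t + M * M ^ T :=
          Nat.add_le_add
            (Nat.mul_le_mul_left _ (Finset.sum_le_sum_of_subset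
              (Finset.range_subset_range.2 (Nat.le_succ T))))
            (Nat.mul_le_mul_left _ (inflow_sum_le j))
      _ = (j + 1) * ∑ t ∈ Finset.range (T + 1), f t + M ^ (T + 1) := by
          rw [← pow_succ']
  rw [Nat.sub_mul, tsub_le_iff_right]
  exact hsum.trans_eq (add_comm _ _)

/-- Total time at level `0` is exactly one time step. -/
lemma level_zero (hT : 0 < T) :
    ∑ t ∈ Finset.range (T + 1),
        (Finset.univ.filter (fun z : Fin T → S => nct z t = 0)).card
      = Fintype.card S ^ T := by
  rw [Finset.sum_range_succ']
  have h1 : ∀ t ∈ Finset.range T,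
      (Finset.univ.filter (fun z : Fin T → S => nct z (t + 1) = 0)).card = 0 := by
    intro t _
    rw [Finset.card_eq_zero, Finset.filter_eq_empty_iff]
    intro z _
    have := nct_succ_pos hT z t
    omega
  rw [Finset.sum_congr rfl h1, Finset.sum_const, smul_eq_mul, mul_zero, zero_add]
  have : (Finset.univ.filter (fun z : Fin T → S => nct z 0 = 0))
      = Finset.univ := by
    apply Finset.filter_true_of_mem
    intro z _
    exact nct_zero z
  rw [this, Finset.card_univ, Fintype.card_fun, Fintype.card_fin]

/-- Markov / union over time: if the final count is `< k`, then at every time the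
count is `< k`. -/
lemma markov (k : ℕ) :
    (T + 1) * (Finset.univ.filter (fun z : Fin T → S => nct z T < k)).card
      ≤ ∑ j ∈ Finset.range k, ∑ t ∈ Finset.range (T + 1),
          (Finset.univ.filter (fun z : Fin T → S => nct z t = j)).card := by
  rw [Finset.sum_comm]
  have hsub : ∀ t ∈ Finset.range (T + 1),
      (Finset.univ.filter (fun z : Fin T → S => nct z T < k)).card
      ≤ ∑ j ∈ Finset.range k,
          (Finset.univ.filter (fun z : Fin T → S => nct z t = j)).card := by
    intro t ht
    rw [Finset.mem_range] at ht
    have hdis : ∀ j ∈ Finset.range k, ∀ j' ∈ Finset.range k, j ≠ j' →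
        Disjoint (Finset.univ.filter (fun z : Fin T → S => nct z t = j))
          (Finset.univ.filter (fun z : Fin T → S => nct z t = j')) := by
      intro j _ j' _ hne
      rw [Finset.disjoint_left]
      intro z hz hz'
      simp only [Finset.mem_filter, Finset.mem_univ, true_and] at hz hz'
      omega
    calc (Finset.univ.filter (fun z : Fin T → S => nct z T < k)).card
        ≤ ((Finset.range k).biUnion (fun j =>
            Finset.univ.filter (fun z : Fin T → S => nct z t = j))).card := by
          apply Finset.card_le_card
          intro z hz
          simp only [Finset.mem_filter, Finset.mem_univ, true_and] at hz
          simp only [Finset.mem_biUnion, Finset.mem_range, Finset.mem_filter,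
            Finset.mem_univ, true_and]
          exact ⟨nct z t, lt_of_le_of_lt (nct_mono z (by omega)) hz, rfl⟩
      _ = ∑ j ∈ Finset.range k,
            (Finset.univ.filter (fun z : Fin T → S => nct z t = j)).card :=
          Finset.card_biUnion hdis
  calc (T + 1) * (Finset.univ.filter (fun z : Fin T → S => nct z T < k)).card
      = ∑ _t ∈ Finset.range (T + 1),
          (Finset.univ.filter (fun z : Fin T → S => nct z T < k)).card := by
        rw [Finset.sum_const, Finset.card_range, smul_eq_mul]
    _ ≤ _ := Finset.sum_le_sum hsub

end Stmt3Aux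

/-- If `Z_1, …, Z_T` are i.i.d. uniform on a finite set `S` of size `M`, `0 < k < M`,
`K ≥ 1` and `T ≥ K·k/(1 - k/M)`, then the probability (computed by counting, since the
joint distribution of `(Z_1, …, Z_T)` is uniform over `S^T`) that the number of distinct
values among `Z_1, …, Z_T` is at least `k` is at least `1 - 1/K`. -/
theorem stmt3 {S : Type*} [Fintype S] [DecidableEq S]
    (M : ℕ) (hM : Fintype.card S = M)
    (k : ℕ) (hk : 0 < k) (hkM : k < M)
    (K : ℝ) (hK : 1 ≤ K)
    (T : ℕ) (hT : 0 < T) (hTK : K * (k : ℝ) / (1 - (k : ℝ) / (M : ℝ)) ≤ (T : ℝ)) :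
    1 - 1 / K ≤
      ((Finset.univ.filter
          (fun z : Fin T → S => k ≤ (Finset.image z Finset.univ).card)).card : ℝ)
        / (M : ℝ) ^ T := by
  classical
  subst hM
  obtain ⟨k', rfl⟩ : ∃ k', k = k' + 1 := ⟨k - 1, by omega⟩
  set M := Fintype.card S with hM
  set Good := Finset.univ.filter
    (fun z : Fin T → S => k' + 1 ≤ (Finset.image z Finset.univ).card) with hGood
  set Bad := Finset.univ.filter
    (fun z : Fin T → S => Stmt3Aux.nct z T < k' + 1) with hBad
  have hMpos : 0 < M := lt_trans hk hkM
  -- counting split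
  have hBadEq : Bad = Finset.univ.filter
      (fun z : Fin T → S => ¬ k' + 1 ≤ (Finset.image z Finset.univ).card) := by
    ext z
    simp [hBad, Stmt3Aux.nct_top, not_le]
  have hsplit : Good.card + Bad.card = M ^ T := by
    rw [hGood, hBadEq, Finset.card_filter_add_card_filter_not,
      Finset.card_univ, Fintype.card_fun, Fintype.card_fin]
  -- the per-level sums
  set Sm : ℕ → ℕ := fun j => ∑ t ∈ Finset.range (T + 1),
    (Finset.univ.filter (fun z : Fin T → S => Stmt3Aux.nct z t = j)).card with hSm
  -- main natural-number inequality
  have hKeyNat : (M - k') * ((T + 1) * Bad.card) ≤ (k' + 1) * M ^ (T + 1) := by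
    calc (M - k') * ((T + 1) * Bad.card)
        ≤ (M - k') * ∑ j ∈ Finset.range (k' + 1), Sm j :=
          Nat.mul_le_mul_left _ (Stmt3Aux.markov (k' + 1))
      _ = (M - k') * Sm 0 + ∑ j ∈ Finset.range k', (M - k') * Sm (j + 1) := by
          rw [Finset.sum_range_succ', Nat.mul_add, Finset.mul_sum]
          ring
      _ ≤ M * M ^ T + ∑ j ∈ Finset.range k', M ^ (T + 1) := by
          apply Nat.add_le_add
          · rw [hSm]
            simp only
            rw [Stmt3Aux.level_zero hT]
            exact Nat.mul_le_mul_right _ (by omega)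
          · apply Finset.sum_le_sum
            intro j hj
            rw [Finset.mem_range] at hj
            calc (M - k') * Sm (j + 1) ≤ (M - (j + 1)) * Sm (j + 1) :=
                  Nat.mul_le_mul_right _ (by omega)
              _ ≤ M ^ (T + 1) := Stmt3Aux.level_sum j
      _ = (k' + 1) * M ^ (T + 1) := by
          rw [Finset.sum_const, Finset.card_range, smul_eq_mul, ← pow_succ']
          ring
  -- move to the reals
  have hk'M : k' < M := by omega
  have hKeyR : ((M : ℝ) - k') * ((T + 1) * (Bad.card : ℝ))
      ≤ (k' + 1) * (M : ℝ) ^ (T + 1) := by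
    have h2 : (((M - k') * ((T + 1) * Bad.card) : ℕ) : ℝ)
        ≤ (((k' + 1) * M ^ (T + 1) : ℕ) : ℝ) := by exact_mod_cast hKeyNat
    push_cast [Nat.cast_sub hk'M.le] at h2
    convert h2 using 1 <;> ring
  have hKpos : (0 : ℝ) < K := lt_of_lt_of_le one_pos hK
  have hMRpos : (0 : ℝ) < (M : ℝ) := by exact_mod_cast hMpos
  have hkMR : ((k' : ℝ) + 1) < (M : ℝ) := by exact_mod_cast hkM
  -- hypothesis on T in product form
  have hT2 : K * ((k' : ℝ) + 1) * M ≤ (T : ℝ) * ((M : ℝ) - (k' + 1)) := by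
    have hfracpos : (0 : ℝ) < 1 - ((k' : ℝ) + 1) / M := by
      rw [sub_pos, div_lt_one hMRpos]
      exact hkMR
    have hTK' : K * ((k' : ℝ) + 1) / (1 - ((k' : ℝ) + 1) / M) ≤ (T : ℝ) := by
      push_cast at hTK ⊢
      exact hTK
    rw [div_le_iff₀ hfracpos] at hTK'
    have := mul_le_mul_of_nonneg_right hTK' hMRpos.le
    calc K * ((k' : ℝ) + 1) * M ≤ (T : ℝ) * (1 - ((k' : ℝ) + 1) / M) * M := this
      _ = (T : ℝ) * ((M : ℝ) - (k' + 1)) := by field_simp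
  -- conclude K * Bad ≤ M^T
  have hfin : K * (Bad.card : ℝ) ≤ (M : ℝ) ^ T := by
    have hpos2 : (0 : ℝ) < ((T : ℝ) + 1) * ((M : ℝ) - k') := by
      have : (k' : ℝ) < M := by linarith
      have h1 : (0 : ℝ) < (T : ℝ) + 1 := by positivity
      nlinarith
    rw [← mul_le_mul_iff_right₀ hpos2]
    have hB1 : K * (((M : ℝ) - k') * ((T + 1) * (Bad.card : ℝ)))
        ≤ K * ((k' + 1) * (M : ℝ) ^ (T + 1)) :=
      mul_le_mul_of_nonneg_left hKeyR hKpos.le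
    calc ((T : ℝ) + 1) * ((M : ℝ) - k') * (K * Bad.card)
        = K * (((M : ℝ) - k') * ((T + 1) * (Bad.card : ℝ))) := by ring
      _ ≤ K * ((k' + 1) * (M : ℝ) ^ (T + 1)) := hB1
      _ = (K * ((k' : ℝ) + 1) * M) * (M : ℝ) ^ T := by rw [pow_succ]; ring
      _ ≤ ((T : ℝ) * ((M : ℝ) - (k' + 1))) * (M : ℝ) ^ T := by
          apply mul_le_mul_of_nonneg_right hT2 (pow_nonneg hMRpos.le T)
      _ ≤ (((T : ℝ) + 1) * ((M : ℝ) - k')) * (M : ℝ) ^ T := by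
          apply mul_le_mul_of_nonneg_right _ (pow_nonneg hMRpos.le T)
          have h1 : (0 : ℝ) ≤ (M : ℝ) - (k' + 1) := by linarith
          have h2 : (0 : ℝ) ≤ (T : ℝ) := by positivity
          nlinarith
  -- finish
  have hPT : (0 : ℝ) < (M : ℝ) ^ T := by positivity
  have hGB : (Good.card : ℝ) + (Bad.card : ℝ) = (M : ℝ) ^ T := by
    exact_mod_cast congrArg (Nat.cast : ℕ → ℝ) hsplit
  have hgoal1 : (Good.card : ℝ) / (M : ℝ) ^ T = 1 - (Bad.card : ℝ) / (M : ℝ) ^ T := by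
    field_simp
    linarith
  rw [hgoal1]
  have hfrac : (Bad.card : ℝ) / (M : ℝ) ^ T ≤ 1 / K := by
    rw [div_le_div_iff₀ hPT hKpos]
    linarith
  linarith
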